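/- Let C > 0. For every ε > 0 there exists M > 0 such that for all real x, y with |x| ≥ M and P_C(x,y) = 0 one has |y²/x² − 1| ≤ ε. That is, along the contours ∂D± of the unified transform method, |Im k / Re k| → 1 as |Re k| → ∞. -/

import Mathlib

/-- The sextic polynomial whose zero set characterizes the integration contours
`∂D±` of the unified transform method for the Guyer–Krumhansl system. -/
def sexticP (C x y : ℝ) : ℝ :=
  y^6 + (x^2 - 2) * y^4 - (x^4 - 4*C*x^2 - 1) * y^2 - (x^6 + 2*x^4 + x^2)

/-- Along the contours `∂D±`, `|Im k / Re k| → 1` as `|Re k| → ∞`: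
for every `ε > 0` there is `M > 0` such that any contour point with `|x| ≥ M`
satisfies `|y²/x² − 1| ≤ ε`. -/
theorem sexticP_asymptotic_slope_at_infinity
    (C : ℝ) (hC : 0 < C) :
    ∀ ε : ℝ, 0 < ε → ∃ M : ℝ, 0 < M ∧
      ∀ x y : ℝ, M ≤ |x| → sexticP C x y = 0 → |y^2 / x^2 - 1| ≤ ε := by
  intro ε hε
  refine ⟨max 2 (4 * Real.sqrt (|1 - C| / ε)), lt_of_lt_of_le two_pos (le_max_left _ _), ?_⟩
  intro x y hx hP
  have h2 : (2 : ℝ) ≤ |x| := le_trans (le_max_left _ _) hx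
  have hs : 4 * Real.sqrt (|1 - C| / ε) ≤ |x| := le_trans (le_max_right _ _) hx
  have hx2 : (4 : ℝ) ≤ x ^ 2 := by
    have := sq_abs x
    nlinarith [abs_nonneg x]
  have hx0 : (0 : ℝ) < x ^ 2 := by linarith
  -- 16 * |1 - C| ≤ ε * x^2
  have hεx : 16 * |1 - C| ≤ ε * x ^ 2 := by
    have hsq : Real.sqrt (|1 - C| / ε) ^ 2 = |1 - C| / ε :=
      Real.sq_sqrt (div_nonneg (abs_nonneg _) hε.le)
    have hs0 : 0 ≤ Real.sqrt (|1 - C| / ε) := Real.sqrt_nonneg _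
    have habs : (4 * Real.sqrt (|1 - C| / ε)) ^ 2 ≤ |x| ^ 2 := by
      apply sq_le_sq' <;> nlinarith [abs_nonneg x]
    have : 16 * (|1 - C| / ε) ≤ x ^ 2 := by
      have := sq_abs x
      nlinarith
    calc 16 * |1 - C| = ε * (16 * (|1 - C| / ε)) := by field_simp
      _ ≤ ε * x ^ 2 := by nlinarith
  -- key algebraic identity
  have key : (y ^ 2 - x ^ 2) * ((x ^ 2 + y ^ 2 - 1) ^ 2 + 4 * C * x ^ 2)
      = 4 * x ^ 4 * (1 - C) := by
    unfold sexticP at hP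
    nlinarith [hP]
  -- denominator lower bound
  have hA : x ^ 4 / 4 ≤ (x ^ 2 + y ^ 2 - 1) ^ 2 + 4 * C * x ^ 2 := by
    have hy : 0 ≤ y ^ 2 := sq_nonneg y
    have h1 : x ^ 2 / 2 ≤ x ^ 2 + y ^ 2 - 1 := by nlinarith
    have h2' : (x ^ 2 / 2) ^ 2 ≤ (x ^ 2 + y ^ 2 - 1) ^ 2 := by
      apply sq_le_sq' <;> nlinarith
    nlinarith [mul_pos hC hx0]
  have hDpos : (0 : ℝ) < (x ^ 2 + y ^ 2 - 1) ^ 2 + 4 * C * x ^ 2 := by nlinarith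
  -- main bound: |y^2 - x^2| ≤ ε * x^2
  have hx4 : (0 : ℝ) < x ^ 4 := by nlinarith [mul_pos hx0 hx0]
  have habs : |y ^ 2 - x ^ 2| * ((x ^ 2 + y ^ 2 - 1) ^ 2 + 4 * C * x ^ 2)
      = 4 * x ^ 4 * |1 - C| := by
    rw [← abs_of_pos hDpos, ← abs_mul, key, abs_mul, abs_of_nonneg (by positivity : (0:ℝ) ≤ 4 * x ^ 4)]
  have hmul : |y ^ 2 - x ^ 2| * (x ^ 4 / 4) ≤ 4 * x ^ 4 * |1 - C| := by
    calc |y ^ 2 - x ^ 2| * (x ^ 4 / 4)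
        ≤ |y ^ 2 - x ^ 2| * ((x ^ 2 + y ^ 2 - 1) ^ 2 + 4 * C * x ^ 2) :=
          mul_le_mul_of_nonneg_left hA (abs_nonneg _)
      _ = 4 * x ^ 4 * |1 - C| := habs
  have h16 : |y ^ 2 - x ^ 2| ≤ 16 * |1 - C| := by nlinarith
  have hmain : |y ^ 2 - x ^ 2| ≤ ε * x ^ 2 := le_trans h16 hεx
  have heq : y ^ 2 / x ^ 2 - 1 = (y ^ 2 - x ^ 2) / x ^ 2 := by
    rw [sub_div, div_self hx0.ne']
  rw [heq, abs_div, abs_of_pos hx0, div_le_iff₀ hx0]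
  linarith [hmain]
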